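/- For all real numbers k_m, k_i, k_j with 0 < k_m < k_i < k_j, and every real t > 0, one has exp(−k_m t) − exp(−k_i t) − ((k_i − k_m)/(k_j − k_m))·(exp(−k_m t) − exp(−k_j t)) > 0, with equality to 0 at t = 0. -/

import Mathlib

open Real

lemma stmt9_key (a b : ℝ) (ha : 0 < a) (hab : a < b) :
    a * (1 - Real.exp (-b)) < b * (1 - Real.exp (-a)) := by
  set C : ℝ := 1 - Real.exp (-a) with hC
  have hmono : StrictMonoOn (fun x : ℝ => x * C - a * (1 - Real.exp (-x))) (Set.Ici a) := by
    apply strictMonoOn_of_deriv_pos (convex_Ici a)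
    · fun_prop
    · intro x hx
      rw [interior_Ici] at hx
      have h1 : HasDerivAt (fun x : ℝ => Real.exp (-x)) (-Real.exp (-x)) x := by
        simpa [Function.comp_def] using (Real.hasDerivAt_exp (-x)).comp x (hasDerivAt_neg x)
      have hd : HasDerivAt (fun x : ℝ => x * C - a * (1 - Real.exp (-x)))
          (C - a * Real.exp (-x)) x := by
        have := ((hasDerivAt_id x).mul_const C).sub
          (((hasDerivAt_const x (1 : ℝ)).sub h1).const_mul a)
        simpa [mul_comm, Pi.sub_def] using this
      rw [hd.deriv]
      have hlt : a * Real.exp (-x) < C := by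
        have h2 : Real.exp (-x) < Real.exp (-a) := Real.exp_lt_exp.mpr (by linarith [hx.out])
        have h3 : a * Real.exp (-a) < 1 - Real.exp (-a) := by
          have h4 : a + 1 < Real.exp a := Real.add_one_lt_exp (ne_of_gt ha)
          have h5 : Real.exp (-a) = (Real.exp a)⁻¹ := Real.exp_neg a
          have h6 : 0 < Real.exp a := Real.exp_pos a
          rw [h5]
          have h7 : (Real.exp a)⁻¹ * Real.exp a = 1 := inv_mul_cancel₀ (ne_of_gt h6)
          nlinarith [h7, h6, h4]
        calc a * Real.exp (-x) < a * Real.exp (-a) := by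
              exact mul_lt_mul_of_pos_left h2 ha
          _ < C := h3
      linarith
  have h0 := hmono (Set.self_mem_Ici) (Set.mem_Ici.mpr (le_of_lt hab)) hab
  simp only [hC] at h0
  nlinarith [h0]

/-- For all real rates `0 < k_m < k_i < k_j` and every real `t > 0`,
`exp (-k_m*t) - exp (-k_i*t) - ((k_i - k_m)/(k_j - k_m)) * (exp (-k_m*t) - exp (-k_j*t)) > 0`,
with equality to `0` at `t = 0`. -/
theorem stmt_9 (km ki kj : ℝ) (hm : 0 < km) (hmi : km < ki) (hij : ki < kj) :
    (∀ t : ℝ, 0 < t →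
      Real.exp (-km * t) - Real.exp (-ki * t) -
        ((ki - km) / (kj - km)) * (Real.exp (-km * t) - Real.exp (-kj * t)) > 0) ∧
    Real.exp (-km * 0) - Real.exp (-ki * 0) -
      ((ki - km) / (kj - km)) * (Real.exp (-km * 0) - Real.exp (-kj * 0)) = 0 := by
  constructor
  · intro t ht
    set a : ℝ := (ki - km) * t with hadef
    set b : ℝ := (kj - km) * t with hbdef
    have ha : 0 < a := mul_pos (by linarith) ht
    have hab : a < b := by
      apply mul_lt_mul_of_pos_right (by linarith) ht
    have hb : 0 < b := lt_trans ha hab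
    have hkey := stmt9_key a b ha hab
    have hE : Real.exp (-km * t) > 0 := Real.exp_pos _
    have hki : Real.exp (-ki * t) = Real.exp (-km * t) * Real.exp (-a) := by
      rw [← Real.exp_add, hadef]; ring_nf
    have hkj : Real.exp (-kj * t) = Real.exp (-km * t) * Real.exp (-b) := by
      rw [← Real.exp_add, hbdef]; ring_nf
    have hc : (ki - km) / (kj - km) = a / b := by
      rw [hadef, hbdef, mul_div_mul_right _ _ (ne_of_gt ht)]
    rw [hki, hkj, hc]
    have hfrac : a / b * (1 - Real.exp (-b)) < 1 - Real.exp (-a) := by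
      rw [div_mul_eq_mul_div, div_lt_iff₀ hb]
      nlinarith [hkey]
    nlinarith [hfrac, hE, mul_pos hE (sub_pos.mpr hfrac)]
  · simp
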